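/- arXiv:1810.11938 — 8 statements merged into one kernel-verified Lean document; each statement's English description precedes it below -/
import Mathlib

section
/- Let n ≥ 2 be an integer and let G = {2^(n-1), 2^(n-1) + 2^(n-2), ..., 2^(n-1) + 2^(n-2) + ... + 2 + 1}, i.e. G = {∑_{i=1}^{b} 2^(n-i) : 1 ≤ b ≤ n}. Let l : ℕ⁺ → ℕ be a sequence with l(1) = 2^(n-1) and l(k+1) − l(k) ∈ G for all k ≥ 1. Set D₁ = {l(k) : k ≥ 1} and, for 2 ≤ j ≤ n, D_j = D₁ ± 2^(n-2) ± 2^(n-3) ± ... ± 2^(n-j). Then the sets D₁, D₂, ..., D_n are pairwise disjoint and their union is the set of all positive integers. -/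
/-- `S ± r = {s + r : s ∈ S} ∪ {s - r : s ∈ S}`. -/
def pmSet (S : Set ℤ) (r : ℤ) : Set ℤ :=
  {x | ∃ s ∈ S, x = s + r} ∪ {x | ∃ s ∈ S, x = s - r}

/-- The `j`-th column: `D₁` for `j ≤ 1`, and
`D_{j+1} = D_j ± 2^(n-(j+1))` for `j ≥ 1`. -/
def Dcol (n : ℕ) (D1 : Set ℤ) : ℕ → Set ℤ
  | 0 => D1
  | 1 => D1
  | (j+2) => pmSet (Dcol n D1 (j+1)) ((2:ℤ) ^ (n - (j+2)))

namespace NSP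

lemma two_pow_dvd_iff (a b : ℕ) : ((2:ℤ)^a ∣ 2^b) ↔ a ≤ b := by
  constructor
  · intro h
    by_contra hab
    push_neg at hab
    have h1 : (2:ℤ)^a ≤ 2^b := Int.le_of_dvd (by positivity) h
    have h2 : (2:ℤ)^b < 2^a := by
      apply pow_lt_pow_right₀ (by norm_num) hab
    omega
  · intro h; exact pow_dvd_pow 2 h
def Tset (n j : ℕ) : Set ℤ :=
  if j = 1 then {0}
  else {t | (2:ℤ)^(n-j) ∣ t ∧ ¬((2:ℤ)^(n-j+1) ∣ t) ∧ |t| < 2^(n-1)}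
lemma bound_le {a s : ℕ} {t : ℤ} (hd : (2:ℤ)^a ∣ t) (hb : |t| < 2^(a+s)) :
    |t| ≤ 2^(a+s) - 2^a := by
  obtain ⟨v, rfl⟩ := hd
  have h2 : |(2:ℤ)^a * v| = 2^a * |v| := by
    rw [abs_mul, abs_pow]; norm_num
  rw [h2] at hb ⊢
  rw [pow_add] at hb ⊢
  have hpos : (0:ℤ) < 2^a := by positivity
  have hv : |v| < 2^s := (mul_lt_mul_iff_right₀ hpos).mp hb
  have hv' : |v| ≤ 2^s - 1 := by omega
  nlinarith
lemma Tset_dvd {n j : ℕ} {t : ℤ} (ht : t ∈ Tset n j) :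
    (2:ℤ)^(n-j) ∣ t ∧ |t| < 2^(n-1) := by
  unfold Tset at ht
  split at ht
  · simp only [Set.mem_singleton_iff] at ht
    subst ht
    refine ⟨dvd_zero _, by simp⟩
  · exact ⟨ht.1, ht.2.2⟩
lemma not_dvd_add {a b : ℕ} (h : b < a) {t : ℤ} (hd : (2:ℤ)^a ∣ t) :
    ¬(2:ℤ)^a ∣ (t + 2^b) := by
  intro hcon
  have h1 : (2:ℤ)^a ∣ 2^b := by
    have := dvd_sub hcon hd; simpa using this
  rw [two_pow_dvd_iff] at h1; omega
lemma not_dvd_sub {a b : ℕ} (h : b < a) {t : ℤ} (hd : (2:ℤ)^a ∣ t) :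
    ¬(2:ℤ)^a ∣ (t - 2^b) := by
  intro hcon
  have h1 : (2:ℤ)^a ∣ 2^b := by
    have := dvd_sub hd hcon; simpa using this
  rw [two_pow_dvd_iff] at h1; omega

lemma pmSet_T (n j : ℕ) (hj : 1 ≤ j) (hjn : j + 1 ≤ n) :
    pmSet (Tset n j) ((2:ℤ)^(n-(j+1))) = Tset n (j+1) := by
  have hnj1 : n - (j+1) + 1 = n - j := by omega
  have hexp : n - 1 = (n - j) + (j - 1) := by omega
  have hsplit : (2:ℤ)^(n-j) = 2 * 2^(n-(j+1)) := by
    have h : n - j = (n-(j+1)) + 1 := by omega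
    rw [h, pow_succ]; ring
  have hrpos : (0:ℤ) < 2^(n-(j+1)) := by positivity
  ext u
  constructor
  · rintro (⟨t, ht, rfl⟩ | ⟨t, ht, rfl⟩) <;>
    · obtain ⟨hd, hb⟩ := Tset_dvd ht
      have habs : |t| ≤ 2^(n-1) - 2^(n-j) := by
        rw [hexp] at hb ⊢
        exact bound_le hd hb
      have hd1 : (2:ℤ)^(n-(j+1)) ∣ t := dvd_trans (pow_dvd_pow 2 (by omega)) hd
      unfold Tset
      rw [if_neg (by omega)]
      refine ⟨?_, ?_, ?_⟩
      · first
          | exact dvd_add hd1 dvd_rfl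
          | exact dvd_sub hd1 dvd_rfl
      · rw [hnj1]
        first
          | exact not_dvd_add (by omega) hd
          | exact not_dvd_sub (by omega) hd
      · have h2 := hsplit
        first
          | (calc |t + 2^(n-(j+1))| ≤ |t| + |(2:ℤ)^(n-(j+1))| := abs_add_le _ _
              _ = |t| + 2^(n-(j+1)) := by rw [abs_of_pos hrpos]
              _ < 2^(n-1) := by omega)
          | (calc |t - 2^(n-(j+1))| ≤ |t| + |(2:ℤ)^(n-(j+1))| := abs_sub _ _
              _ = |t| + 2^(n-(j+1)) := by rw [abs_of_pos hrpos]
              _ < 2^(n-1) := by omega)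
  · intro hu
    unfold Tset at hu
    rw [if_neg (by omega), hnj1] at hu
    obtain ⟨⟨v, rfl⟩, hnd, hb⟩ := hu
    have hvodd : ¬ (2:ℤ) ∣ v := by
      intro h
      obtain ⟨w, rfl⟩ := h
      apply hnd
      rw [hsplit]
      exact ⟨w, by ring⟩
    have hvabs : |v| ≤ 2^(j) - 1 := by
      have h : 2^(n-(j+1)) * |v| < 2^(n-(j+1)) * 2^j := by
        calc 2^(n-(j+1)) * |v| = |(2:ℤ)^(n-(j+1)) * v| := by rw [abs_mul, abs_pow]; norm_num
        _ < 2^(n-1) := hb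
        _ = 2^(n-(j+1)) * 2^j := by rw [← pow_add]; congr 1; omega
      have := (mul_lt_mul_iff_right₀ hrpos).mp h
      omega
    rcases eq_or_lt_of_le hj with hj1 | hj2
    · -- j = 1 : v = ±1, u = 0 ± r
      have hv : v = 1 ∨ v = -1 := by
        have hne : v ≠ 0 := by rintro rfl; exact hvodd (dvd_zero 2)
        rw [← hj1] at hvabs
        have h3 : |v| ≤ 1 := by norm_num at hvabs; omega
        rcases abs_le.mp h3 with ⟨h4, h5⟩
        omega
      have hT : Tset n j = {0} := by unfold Tset; rw [if_pos hj1.symm]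
      rw [hT]
      rcases hv with rfl | rfl
      · exact Or.inl ⟨0, rfl, by ring⟩
      · exact Or.inr ⟨0, rfl, by ring⟩
    · -- j ≥ 2
      have hTj : Tset n j = {t | (2:ℤ)^(n-j) ∣ t ∧ ¬((2:ℤ)^(n-j+1) ∣ t) ∧ |t| < 2^(n-1)} := by
        unfold Tset; rw [if_neg (by omega)]
      have h4j : (4:ℤ) ∣ 2^j := by
        have : (2:ℤ)^j = 4 * 2^(j-2) := by
          have h : j = 2 + (j - 2) := by omega
          rw [h]; rw [pow_add]; norm_num
        rw [this]; exact ⟨_, rfl⟩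
      have hmem : ∀ w : ℤ, (2:ℤ) ∣ w → ¬ (4:ℤ) ∣ w → |w| ≤ 2^j →
          2^(n-(j+1)) * w ∈ Tset n j := by
        intro w h2w h4w habsw
        rw [hTj]
        obtain ⟨c, rfl⟩ := h2w
        have habsw' : |2*c| ≤ 2^j - 1 := by
          rcases eq_or_lt_of_le habsw with he | hlt
          · exfalso
            apply h4w
            rcases abs_eq (by positivity : (0:ℤ) ≤ 2^j) |>.mp he with h | h
            · rw [h]; exact h4j
            · rw [h]; exact dvd_neg.mpr h4j
          · omega
        refine ⟨⟨c, by rw [hsplit]; ring⟩, ?_, ?_⟩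
        · intro hcon
          apply h4w
          have heq : n - j + 1 = (n-(j+1)) + 2 := by omega
          rw [heq, pow_add] at hcon
          have := (mul_dvd_mul_iff_left (pow_ne_zero (n-(j+1)) (two_ne_zero (α := ℤ)))).mp hcon
          simpa using this
        · have e1 : |(2:ℤ)^(n-(j+1)) * (2*c)| = 2^(n-(j+1)) * |2*c| := by
            rw [abs_mul, abs_pow]; norm_num
          have e2 : (2:ℤ)^(n-(j+1)) * |2*c| ≤ 2^(n-(j+1)) * (2^j - 1) :=
            mul_le_mul_of_nonneg_left habsw' (le_of_lt hrpos)
          have e3 : (2:ℤ)^(n-(j+1)) * 2^j = 2^(n-1) := by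
            rw [← pow_add]; congr 1; omega
          rw [e1]
          nlinarith
      by_cases h4 : (4:ℤ) ∣ v + 1
      · -- then ¬ 4 ∣ v - 1; use t = u - r, u = t + r
        have h4' : ¬ (4:ℤ) ∣ v - 1 := by
          intro hcon
          have : (4:ℤ) ∣ 2 := by
            have := dvd_sub h4 hcon; simpa using this
          norm_num at this
        refine Or.inl ⟨2^(n-(j+1)) * (v - 1), hmem (v-1) ?_ h4' ?_, by ring⟩
        · rcases Int.even_or_odd v with he | ho
          · exfalso; exact hvodd he.two_dvd
          · obtain ⟨c, rfl⟩ := ho; exact ⟨c, by ring⟩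
        · rcases abs_le.mp hvabs with ⟨h5, h6⟩
          rw [abs_le]; constructor <;> omega
      · refine Or.inr ⟨2^(n-(j+1)) * (v + 1), hmem (v+1) ?_ h4 ?_, by ring⟩
        · rcases Int.even_or_odd v with he | ho
          · exfalso; exact hvodd he.two_dvd
          · obtain ⟨c, rfl⟩ := ho; exact ⟨c + 1, by ring⟩
        · rcases abs_le.mp hvabs with ⟨h5, h6⟩
          rw [abs_le]; constructor <;> omega
lemma pmSet_comm (D T : Set ℤ) (r : ℤ) :
    pmSet {x | ∃ s ∈ D, ∃ t ∈ T, x = s + t} r = {x | ∃ s ∈ D, ∃ t ∈ pmSet T r, x = s + t} := by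
  ext u
  simp only [pmSet, Set.mem_union, Set.mem_setOf_eq]
  constructor
  · rintro (⟨x, ⟨s, hs, t, ht, rfl⟩, rfl⟩ | ⟨x, ⟨s, hs, t, ht, rfl⟩, rfl⟩)
    · exact ⟨s, hs, t + r, Or.inl ⟨t, ht, rfl⟩, by ring⟩
    · exact ⟨s, hs, t - r, Or.inr ⟨t, ht, rfl⟩, by ring⟩
  · rintro ⟨s, hs, t', ⟨t, ht, rfl⟩ | ⟨t, ht, rfl⟩, rfl⟩
    · exact Or.inl ⟨s + t, ⟨s, hs, t, ht, rfl⟩, by ring⟩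
    · exact Or.inr ⟨s + t, ⟨s, hs, t, ht, rfl⟩, by ring⟩

lemma Dchar (n : ℕ) (D1 : Set ℤ) :
    ∀ j, 1 ≤ j → j ≤ n →
      Dcol n D1 j = {x | ∃ s ∈ D1, ∃ t ∈ Tset n j, x = s + t} := by
  intro j hj
  induction j, hj using Nat.le_induction with
  | base =>
    intro _
    show D1 = _
    ext x
    simp only [Set.mem_setOf_eq, Tset, if_pos rfl, Set.mem_singleton_iff]
    constructor
    · intro hx; exact ⟨x, hx, 0, rfl, by ring⟩
    · rintro ⟨s, hs, t, rfl, rfl⟩; simpa using hs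
  | succ j hj ih =>
    intro hjn
    obtain ⟨i, rfl⟩ : ∃ i, j = i + 1 := ⟨j - 1, by omega⟩
    show pmSet (Dcol n D1 (i+1)) ((2:ℤ)^(n-(i+2))) = _
    rw [ih (by omega), pmSet_comm, pmSet_T n (i+1) (by omega) (by omega)]

lemma sum_geom (n : ℕ) : ∀ b, b ≤ n → ∑ i ∈ Finset.Icc 1 b, (2:ℤ)^(n-i) = 2^n - 2^(n-b) := by
  intro b
  induction b with
  | zero => simp
  | succ b ih =>
    intro hb
    rw [Finset.sum_Icc_succ_top (by omega), ih (by omega)]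
    have h1 : n - b = (n - (b+1)) + 1 := by omega
    rw [h1, pow_succ]
    ring
lemma abs_pow_mul (a : ℕ) (w : ℤ) : |(2:ℤ)^a * w| = 2^a * |w| := by
  rw [abs_mul, abs_pow]; norm_num

lemma factor_abs {a s : ℕ} {w : ℤ} (hb : |(2:ℤ)^a * w| < 2^(a+s)) : |w| ≤ 2^s - 1 := by
  rw [abs_pow_mul, pow_add] at hb
  have hpos : (0:ℤ) < 2^a := by positivity
  have := (mul_lt_mul_iff_right₀ hpos).mp hb
  omega

lemma Tset_mem {n j : ℕ} (hj : 2 ≤ j) {t : ℤ} (ht : t ∈ Tset n j) :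
    (2:ℤ)^(n-j) ∣ t ∧ ¬((2:ℤ)^(n-j+1) ∣ t) ∧ |t| < 2^(n-1) := by
  unfold Tset at ht
  rwa [if_neg (by omega)] at ht

lemma Tset_zero {n j : ℕ} (hj : j = 1) {t : ℤ} (ht : t ∈ Tset n j) : t = 0 := by
  unfold Tset at ht
  rw [if_pos hj] at ht
  simpa using ht

lemma Tset_abs' {n j : ℕ} {t : ℤ} (ht : t ∈ Tset n j) : |t| < 2^(n-1) := by
  unfold Tset at ht
  split at ht
  · simp only [Set.mem_singleton_iff] at ht; subst ht; simp
  · exact ht.2.2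

lemma Tset_disj (n : ℕ) {j j' : ℕ} (hj : 1 ≤ j) (hjn : j ≤ n) (hj' : 1 ≤ j') (hj'n : j' ≤ n)
    {t : ℤ} (ht : t ∈ Tset n j) (ht' : t ∈ Tset n j') : j = j' := by
  by_contra hne
  have key : ∀ u u' : ℕ, 1 ≤ u → u' ≤ n → u < u' →
      t ∈ Tset n u → t ∈ Tset n u' → False := by
    intro u u' hu hu'n huu htu htu'
    rcases eq_or_lt_of_le hu with hu1 | hu2
    · have ht0 : t = 0 := Tset_zero hu1.symm htu
      have h2 := Tset_mem (by omega) htu'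
      exact h2.2.1 (ht0 ▸ dvd_zero _)
    · have h1 := Tset_mem (by omega) htu
      have h2 := Tset_mem (by omega) htu'
      exact h2.2.1 (dvd_trans (pow_dvd_pow 2 (by omega)) h1.1)
  rcases lt_or_gt_of_ne hne with h | h
  · exact key j j' hj hj'n h ht ht'
  · exact key j' j hj' hjn h ht' ht

lemma val_key (n b : ℕ) (hn : 2 ≤ n) (hb1 : 1 ≤ b) (hbn : b ≤ n)
    {j j' : ℕ} (hj : 1 ≤ j) (hjn : j ≤ n) (hj' : 1 ≤ j') (hj'n : j' ≤ n)
    {t t' : ℤ} (ht : t ∈ Tset n j) (ht' : t' ∈ Tset n j')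
    (heq : t = t' + 2^(n-b) * (2^b - 1)) : j = j' := by
  by_contra hne
  set c := n - b with hc
  set o : ℤ := 2^b - 1 with ho
  have hsplitb : (2:ℤ)^b = 2^(b-1) * 2 := by
    rw [← pow_succ]
    congr 1
    omega
  have hoodd : ¬ (2:ℤ) ∣ o := by
    rw [ho, hsplitb]
    intro hd
    obtain ⟨e, he⟩ := hd
    omega
  have hcb : (2:ℤ)^c * 2^(b-1) = 2^(n-1) := by
    rw [← pow_add]; congr 1; omega
  have hb1pos : (0:ℤ) < 2^(b-1) := by positivity
  have hcpos : (0:ℤ) < 2^c := by positivity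
  have hopos : (1:ℤ) ≤ o := by rw [ho, hsplitb]; omega
  have hbig : 2^(n-1) ≤ (2:ℤ)^c * o := by
    calc (2:ℤ)^(n-1) = 2^c * 2^(b-1) := hcb.symm
    _ ≤ 2^c * o := by
        apply mul_le_mul_of_nonneg_left _ (le_of_lt hcpos)
        rw [ho, hsplitb]; omega
  have hcoabs : |(2:ℤ)^c * o| = 2^c * o := abs_of_pos (by positivity)
  -- exclude j = 1
  have hj2 : 2 ≤ j := by
    rcases eq_or_lt_of_le hj with h1 | h2
    · exfalso
      have ht0 : t = 0 := Tset_zero h1.symm ht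
      have habs := Tset_abs' ht'
      have h3 : t' = -(2^c * o) := by rw [ht0] at heq; linarith
      rw [h3, abs_neg, hcoabs] at habs
      linarith
    · omega
  have hj'2 : 2 ≤ j' := by
    rcases eq_or_lt_of_le hj' with h1 | h2
    · exfalso
      have ht0 : t' = 0 := Tset_zero h1.symm ht'
      have habs := Tset_abs' ht
      have h3 : t = 2^c * o := by rw [ht0] at heq; linarith
      rw [h3, hcoabs] at habs
      linarith
    · omega
  have h1 := Tset_mem hj2 ht
  have h2 := Tset_mem hj'2 ht'
  set a := n - j with hA
  set a' := n - j' with hA'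
  have hane : a ≠ a' := by omega
  have hdiff : t - t' = 2^c * o := by rw [heq]; ring
  -- middle cases abstracted
  have hmid : c < a → c < a' → False := by
    intro hca hca'
    apply hoodd
    have d1 : (2:ℤ)^(c+1) ∣ t := dvd_trans (pow_dvd_pow 2 (by omega)) h1.1
    have d2 : (2:ℤ)^(c+1) ∣ t' := dvd_trans (pow_dvd_pow 2 (by omega)) h2.1
    have d3 : (2:ℤ)^(c+1) ∣ 2^c * o := hdiff ▸ dvd_sub d1 d2
    rw [pow_succ] at d3
    exact (mul_dvd_mul_iff_left (pow_ne_zero c (two_ne_zero (α := ℤ)))).mp d3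
  have hexp : c + (b-1) = n - 1 := by omega
  rcases lt_or_gt_of_ne hane with hlt | hgt
  · -- a < a'
    rcases lt_trichotomy a c with hac | hac | hac
    · apply h1.2.1
      have d1 : (2:ℤ)^(n-j+1) ∣ t' := dvd_trans (pow_dvd_pow 2 (by omega)) h2.1
      have d2 : (2:ℤ)^(n-j+1) ∣ 2^c * o := dvd_mul_of_dvd_left (pow_dvd_pow 2 (by omega)) o
      rw [heq]
      exact dvd_add d1 d2
    · -- a = c : magnitude contradiction on t'
      obtain ⟨w, hw⟩ := h1.1
      have hwabs : |w| ≤ 2^(b-1) - 1 := by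
        apply factor_abs (a := n-j) (s := b-1)
        rw [← hw]
        have he : n - j + (b-1) = n - 1 := by omega
        rw [he]
        exact h1.2.2
      have ht'eq : t' = 2^c * (w - o) := by
        have : t' = t - 2^c * o := by linarith [hdiff]
        rw [this, hw, ← hac]
        ring
      have hwo : w - o ≤ -2^(b-1) := by
        have h5 := abs_le.mp hwabs
        rw [ho, hsplitb]
        omega
      have habs' : 2^(n-1) ≤ |t'| := by
        rw [ht'eq, abs_pow_mul]
        have h5 : 2^(b-1) ≤ |w - o| := by
          have h6 : 2^(b-1) ≤ -(w - o) := by linarith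
          linarith [neg_le_abs (w - o)]
        calc (2:ℤ)^(n-1) = 2^c * 2^(b-1) := hcb.symm
        _ ≤ 2^c * |w - o| := mul_le_mul_of_nonneg_left h5 (le_of_lt hcpos)
      linarith [h2.2.2]
    · exact hmid hac (by omega)
  · -- a' < a
    rcases lt_trichotomy a' c with hac | hac | hac
    · apply h2.2.1
      have d1 : (2:ℤ)^(n-j'+1) ∣ t := dvd_trans (pow_dvd_pow 2 (by omega)) h1.1
      have d2 : (2:ℤ)^(n-j'+1) ∣ 2^c * o := dvd_mul_of_dvd_left (pow_dvd_pow 2 (by omega)) o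
      have h3 : t' = t - 2^c * o := by linarith [hdiff]
      rw [h3]
      exact dvd_sub d1 d2
    · obtain ⟨w, hw⟩ := h2.1
      have hwabs : |w| ≤ 2^(b-1) - 1 := by
        apply factor_abs (a := n-j') (s := b-1)
        rw [← hw]
        have he : n - j' + (b-1) = n - 1 := by omega
        rw [he]
        exact h2.2.2
      have hteq : t = 2^c * (w + o) := by
        rw [heq, hw, ← hac]
        ring
      have hwo : 2^(b-1) ≤ w + o := by
        have h5 := abs_le.mp hwabs
        rw [ho, hsplitb]
        omega
      have habs' : 2^(n-1) ≤ |t| := by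
        rw [hteq, abs_pow_mul]
        have h5 : 2^(b-1) ≤ |w + o| := le_trans hwo (le_abs_self _)
        calc (2:ℤ)^(n-1) = 2^c * 2^(b-1) := hcb.symm
        _ ≤ 2^c * |w + o| := mul_le_mul_of_nonneg_left h5 (le_of_lt hcpos)
      linarith [h1.2.2]
    · exact hmid (by omega) hac

lemma exists_exact (t : ℤ) (ht : t ≠ 0) : ∃ a, (2:ℤ)^a ∣ t ∧ ¬(2:ℤ)^(a+1) ∣ t := by
  classical
  have hnd : ∃ a, ¬ (2:ℤ)^a ∣ t := by
    refine ⟨t.natAbs, ?_⟩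
    intro hd
    have h1 : (2:ℤ)^t.natAbs ≤ |t| := Int.le_of_dvd (abs_pos.mpr ht) ((dvd_abs _ _).mpr hd)
    have h2 : |t| = (t.natAbs : ℤ) := Int.abs_eq_natAbs t
    have h3 : (t.natAbs:ℤ) < 2^t.natAbs := by exact_mod_cast (Nat.lt_two_pow_self (n := t.natAbs))
    linarith
  have ha0 := Nat.find_spec hnd
  have ha0pos : Nat.find hnd ≠ 0 := by
    intro h
    rw [h] at ha0
    exact ha0 (by simp)
  refine ⟨Nat.find hnd - 1, ?_, ?_⟩
  · exact not_not.mp (Nat.find_min hnd (show Nat.find hnd - 1 < Nat.find hnd by omega))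
  · have h : Nat.find hnd - 1 + 1 = Nat.find hnd := by omega
    rw [h]
    exact ha0

end NSP

open NSP in
theorem n_set_partition (n : ℕ) (hn : 2 ≤ n) (l : ℕ → ℤ)
    (hl1 : l 1 = 2 ^ (n-1))
    (hld : ∀ k, 1 ≤ k → ∃ b, 1 ≤ b ∧ b ≤ n ∧
      l (k+1) - l k = ∑ i ∈ Finset.Icc 1 b, (2:ℤ) ^ (n - i)) :
    Set.PairwiseDisjoint (Set.Icc 1 n)
      (fun j => Dcol n {x | ∃ k, 1 ≤ k ∧ x = l k} j) ∧
    (⋃ j ∈ Set.Icc 1 n, Dcol n {x | ∃ k, 1 ≤ k ∧ x = l k} j) = {m : ℤ | 0 < m} := by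
  classical
  set D1 : Set ℤ := {x | ∃ k, 1 ≤ k ∧ x = l k} with hD1
  have hP : (0:ℤ) < 2^(n-1) := by positivity
  have hPn : (2:ℤ)^n = 2 * 2^(n-1) := by
    have h : n = 1 + (n-1) := by omega
    rw [h, pow_add]
    norm_num
  have hstep : ∀ k, 1 ≤ k → ∃ b, 1 ≤ b ∧ b ≤ n ∧ l (k+1) - l k = 2^(n-b) * (2^b - 1) := by
    intro k hk
    obtain ⟨b, hb1, hbn, hdiff⟩ := hld k hk
    refine ⟨b, hb1, hbn, ?_⟩
    rw [hdiff, sum_geom n b hbn, mul_sub, mul_one, ← pow_add]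
    congr 2
    omega
  have hbounds : ∀ k, 1 ≤ k → 2^(n-1) ≤ l (k+1) - l k ∧ l (k+1) - l k ≤ 2^n - 1 := by
    intro k hk
    obtain ⟨b, hb1, hbn, hd⟩ := hstep k hk
    have h1 : (2:ℤ)^(n-b) * 2^b = 2^n := by rw [← pow_add]; congr 1; omega
    have h2 : (0:ℤ) < 2^(n-b) := by positivity
    have h2' : (1:ℤ) ≤ 2^(n-b) := h2
    have h3 : (2:ℤ)^(n-b) ≤ 2^(n-1) := pow_le_pow_right₀ (by norm_num) (by omega)
    constructor <;> nlinarith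
  have lgrow : ∀ k, 1 ≤ k → ∀ d : ℕ,
      (d:ℤ) * 2^(n-1) ≤ l (k+d) - l k ∧ l (k+d) - l k ≤ (d:ℤ) * (2^n - 1) := by
    intro k hk d
    induction d with
    | zero => simp
    | succ d ih =>
      obtain ⟨ih1, ih2⟩ := ih
      obtain ⟨hb1, hb2⟩ := hbounds (k+d) (by omega)
      have he : k + (d+1) = (k+d)+1 := by omega
      rw [he]
      push_cast
      constructor <;> linarith
  have llow : ∀ k : ℕ, 1 ≤ k → (k:ℤ) * 2^(n-1) ≤ l k := by
    intro k hk
    have h := (lgrow 1 le_rfl (k-1)).1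
    have he : 1 + (k-1) = k := by omega
    rw [he, hl1] at h
    have hc : ((k-1 : ℕ) : ℤ) = (k:ℤ) - 1 := by
      have : (1:ℕ) ≤ k := hk
      push_cast [this]
      ring
    rw [hc] at h
    linarith
  have hchar := Dchar n D1
  have hkey : ∀ j j' k k' : ℕ, 1 ≤ j → j ≤ n → 1 ≤ j' → j' ≤ n → 1 ≤ k → k ≤ k' →
      ∀ t t' : ℤ, t ∈ Tset n j → t' ∈ Tset n j' → l k + t = l k' + t' → j = j' := by
    intro j j' k k' hj hjn hj' hj'n hk hkk t t' ht ht' heq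
    have hk'eq : k' = k + (k' - k) := by omega
    rcases Nat.lt_or_ge (k' - k) 2 with hd2 | hd2
    · rcases Nat.lt_or_ge (k' - k) 1 with hd0 | hd1
      · -- k = k'
        have hkk' : k = k' := by omega
        have htt : t = t' := by rw [hkk'] at heq; linarith
        exact Tset_disj n hj hjn hj' hj'n ht (htt ▸ ht')
      · -- k' = k + 1
        have hkk1 : k' = k + 1 := by omega
        obtain ⟨b, hb1, hbn, hd⟩ := hstep k hk
        have heq2 : t = t' + 2^(n-b) * (2^b - 1) := by
          rw [hkk1] at heq
          linarith
        exact val_key n b hn hb1 hbn hj hjn hj' hj'n ht ht' heq2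
    · exfalso
      have hg := (lgrow k hk (k' - k)).1
      rw [← hk'eq] at hg
      have h1 := Tset_abs' ht
      have h2 := Tset_abs' ht'
      have hd2' : (2:ℤ) ≤ ((k' - k : ℕ) : ℤ) := by exact_mod_cast hd2
      have e1 : t - t' = l k' - l k := by linarith
      have e2 : t - t' < 2 * 2^(n-1) := by
        have := abs_lt.mp h1
        have := abs_lt.mp h2
        linarith
      nlinarith
  refine ⟨?_, ?_⟩
  · intro j hj j' hj' hne
    simp only [Set.mem_Icc] at hj hj'
    rw [Function.onFun, Set.disjoint_left]
    intro m hm hm'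
    rw [hchar j hj.1 hj.2] at hm
    rw [hchar j' hj'.1 hj'.2] at hm'
    obtain ⟨s, ⟨k, hk, rfl⟩, t, ht, heq1⟩ := hm
    obtain ⟨s', ⟨k', hk', rfl⟩, t', ht', heq2⟩ := hm'
    have heq : l k + t = l k' + t' := by rw [← heq1, ← heq2]
    rcases Nat.le_total k k' with hkk | hkk
    · exact hne (hkey j j' k k' hj.1 hj.2 hj'.1 hj'.2 hk hkk t t' ht ht' heq)
    · exact hne (hkey j' j k' k hj'.1 hj'.2 hj.1 hj.2 hk' hkk t' t ht' ht heq.symm).symm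
  · ext m
    simp only [Set.mem_iUnion, Set.mem_Icc, Set.mem_setOf_eq, exists_prop]
    constructor
    · rintro ⟨j, ⟨hj1, hjn⟩, hm⟩
      rw [hchar j hj1 hjn] at hm
      obtain ⟨s, ⟨k, hk, rfl⟩, t, ht, rfl⟩ := hm
      have h1 := llow k hk
      have h2 := abs_lt.mp (Tset_abs' ht)
      have hk1 : (1:ℤ) ≤ (k:ℤ) := by exact_mod_cast hk
      nlinarith
    · intro hm
      have hex : ∃ k, 1 ≤ k ∧ m + 2^(n-1) ≤ l (k+1) := by
        refine ⟨(m + 2^(n-1)).toNat + 1, by omega, ?_⟩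
        have h1 := llow ((m + 2^(n-1)).toNat + 2) (by omega)
        have h2 : ((m + 2^(n-1)).toNat : ℤ) = m + 2^(n-1) := by
          rw [Int.toNat_of_nonneg (by linarith)]
        have h3 : (((m + 2^(n-1)).toNat + 2 : ℕ) : ℤ) = m + 2^(n-1) + 2 := by
          push_cast
          rw [h2]
        have h4 : (((m + 2^(n-1)).toNat + 2 : ℕ) : ℤ) * 2^(n-1) ≥ m + 2^(n-1) := by
          rw [h3]
          nlinarith
        have h5 : (m + 2^(n-1)).toNat + 1 + 1 = (m + 2^(n-1)).toNat + 2 := by omega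
        rw [h5]
        linarith
      obtain ⟨k0, ⟨hk01, hk0u⟩, hmin⟩ :
          ∃ k, (1 ≤ k ∧ m + 2^(n-1) ≤ l (k+1)) ∧
            ∀ k' < k, ¬(1 ≤ k' ∧ m + 2^(n-1) ≤ l (k'+1)) :=
        ⟨Nat.find hex, Nat.find_spec hex, fun k' h => Nat.find_min hex h⟩
      have hup : l k0 < m + 2^(n-1) := by
        rcases eq_or_lt_of_le hk01 with h1 | h2
        · rw [← h1, hl1]
          linarith
        · have hmin' := hmin (k0 - 1) (by omega)
          push_neg at hmin'
          have h3 := hmin' (by omega)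
          have he : k0 - 1 + 1 = k0 := by omega
          rw [he] at h3
          linarith
      have hlo : m - 2^(n-1) < l k0 := by
        have hb := (hbounds k0 hk01).2
        linarith
      have habs : |m - l k0| < 2^(n-1) := abs_lt.mpr ⟨by linarith, by linarith⟩
      by_cases ht0 : m - l k0 = 0
      · refine ⟨1, ⟨le_rfl, by omega⟩, ?_⟩
        rw [hchar 1 le_rfl (by omega)]
        refine ⟨l k0, ⟨k0, hk01, rfl⟩, 0, ?_, by linarith⟩
        unfold Tset
        rw [if_pos rfl]
        rfl
      · obtain ⟨a, ha1, ha2⟩ := exists_exact _ ht0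
        have haN : a ≤ n - 2 := by
          by_contra hcon
          push_neg at hcon
          have h1 : (2:ℤ)^a ≤ |m - l k0| :=
            Int.le_of_dvd (abs_pos.mpr ht0) ((dvd_abs _ _).mpr ha1)
          have h2 : (2:ℤ)^(n-1) ≤ 2^a := pow_le_pow_right₀ (by norm_num) (by omega)
          linarith
        refine ⟨n - a, ⟨by omega, by omega⟩, ?_⟩
        rw [hchar (n-a) (by omega) (by omega)]
        refine ⟨l k0, ⟨k0, hk01, rfl⟩, m - l k0, ?_, by ring⟩
        unfold Tset
        rw [if_neg (by omega)]
        have he : n - (n - a) = a := by omega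
        rw [he]
        exact ⟨ha1, ha2, habs⟩
end

section
/- Let α be a real number with 1 ≤ α < 2 and let n ≥ 2 be an integer. Define t(k) = (2^(n-1) − 1)·⌊kα⌋ + k for positive integers k. Then t(1) = 2^(n-1) and t(k+1) − t(k) ∈ G = {∑_{i=1}^{b} 2^(n-i) : 1 ≤ b ≤ n} for all k ≥ 1; consequently, the sets D₁ = {t(k) : k ≥ 1} and D_j = D₁ ± 2^(n-2) ± ... ± 2^(n-j) for 2 ≤ j ≤ n are pairwise disjoint and their union is the set of all positive integers. -/
/-- `t(k) = (2^(n-1) - 1)⌊kα⌋ + k`. -/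
noncomputable def tSeq (α : ℝ) (n : ℕ) (k : ℕ) : ℤ :=
  ((2:ℤ) ^ (n-1) - 1) * ⌊(k : ℝ) * α⌋ + k

/-- offset predicate -/
def Ep (n j : ℕ) (e : ℤ) : Prop :=
  ∃ c : ℤ, e = c * 2^(n-j) ∧ c ≤ 2^(j-1) - 1 ∧ -(2^(j-1) - 1) ≤ c ∧ (2 ≤ j → c % 2 = 1)

lemma Ep_one (n : ℕ) (e : ℤ) : Ep n 1 e ↔ e = 0 := by
  constructor
  · rintro ⟨c, rfl, h1, h2, -⟩
    norm_num at h1 h2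
    have : c = 0 := by omega
    simp [this]
  · rintro rfl; exact ⟨0, by simp⟩

lemma Dcol_succ (n : ℕ) (D1 : Set ℤ) (j : ℕ) (hj : 1 ≤ j) :
    Dcol n D1 (j+1) = pmSet (Dcol n D1 j) ((2:ℤ)^(n-(j+1))) := by
  cases j with
  | zero => exact absurd hj (by omega)
  | succ i => rfl

lemma Ep_step (n j : ℕ) (hj : 1 ≤ j) (hjn : j + 1 ≤ n) (e : ℤ) :
    Ep n (j+1) e ↔ ∃ e', Ep n j e' ∧ (e = e' + 2^(n-(j+1)) ∨ e = e' - 2^(n-(j+1))) := by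
  have hnj : n - j = (n - (j+1)) + 1 := by omega
  have hpow : (2:ℤ)^(n-j) = 2 * 2^(n-(j+1)) := by
    rw [hnj, pow_succ]; ring
  have hjj : (2:ℤ)^((j+1)-1) = 2 * 2^(j-1) := by
    rw [show (j+1)-1 = (j-1)+1 by omega, pow_succ]; ring
  constructor
  · rintro ⟨c, rfl, h1, h2, hodd⟩
    have hc : c % 2 = 1 := hodd (by omega)
    rw [hjj] at h1 h2
    rcases eq_or_lt_of_le hj with hj1 | hj2
    · -- j = 1
      have hp0 : (2:ℤ)^(j-1) = 1 := by rw [← hj1]; norm_num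
      rw [hp0] at h1 h2
      have : c = 1 ∨ c = -1 := by omega
      rcases this with rfl | rfl
      · refine ⟨0, ⟨0, by simp, by rw [hp0]; norm_num, by rw [hp0]; norm_num,
          fun h => absurd h (by omega)⟩, Or.inl (by ring)⟩
      · refine ⟨0, ⟨0, by simp, by rw [hp0]; norm_num, by rw [hp0]; norm_num,
          fun h => absurd h (by omega)⟩, Or.inr (by ring)⟩
    · -- 2 ≤ j
      obtain ⟨Q, hQe, hQ1⟩ : ∃ Q, (2:ℤ)^(j-1) = 2 * Q ∧ 1 ≤ Q := by
        refine ⟨2^(j-2), ?_, by have := pow_pos (show (0:ℤ)<2 by norm_num) (j-2); omega⟩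
        rw [show j - 1 = (j-2)+1 by omega, pow_succ]; ring
      rw [hQe] at h1 h2
      obtain ⟨d, hd⟩ : ∃ d : ℤ, c = 2*d + 1 := ⟨(c-1)/2, by omega⟩
      rcases Int.even_or_odd d with ⟨t, ht⟩ | ⟨t, ht⟩
      · refine ⟨(d+1) * 2^(n-j), ⟨d+1, rfl, ?_, ?_, fun _ => by omega⟩, Or.inr ?_⟩
        · rw [hQe]; omega
        · rw [hQe]; omega
        · rw [hpow]; linear_combination (2:ℤ)^(n-(j+1)) * hd
      · refine ⟨d * 2^(n-j), ⟨d, rfl, ?_, ?_, fun _ => by omega⟩, Or.inl ?_⟩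
        · rw [hQe]; omega
        · rw [hQe]; omega
        · rw [hpow]; linear_combination (2:ℤ)^(n-(j+1)) * hd
  · rintro ⟨e', ⟨c', rfl, h1, h2, hodd⟩, he | he⟩
    · refine ⟨2*c' + 1, ?_, ?_, ?_, fun _ => by omega⟩
      · rw [he, hpow]; ring
      · rw [hjj]; omega
      · rw [hjj]; omega
    · refine ⟨2*c' - 1, ?_, ?_, ?_, fun _ => by omega⟩
      · rw [he, hpow]; ring
      · rw [hjj]; omega
      · rw [hjj]; omega

lemma Dcol_mem (n : ℕ) (D1 : Set ℤ) :
    ∀ j, 1 ≤ j → j ≤ n → ∀ m,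
      (m ∈ Dcol n D1 j ↔ ∃ s ∈ D1, ∃ e, Ep n j e ∧ m = s + e) := by
  intro j
  induction j with
  | zero => intro h; exact absurd h (by omega)
  | succ i ih =>
    intro h1 hn m
    rcases Nat.eq_zero_or_pos i with rfl | hi
    · show m ∈ D1 ↔ _
      constructor
      · intro hm; exact ⟨m, hm, 0, (Ep_one n 0).2 rfl, by ring⟩
      · rintro ⟨s, hs, e, he, rfl⟩
        rw [Ep_one] at he; simpa [he] using hs
    · rw [Dcol_succ n D1 i hi]
      have hstep := Ep_step n i hi (by omega)
      simp only [pmSet, Set.mem_union, Set.mem_setOf_eq]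
      constructor
      · rintro (⟨x, hx, rfl⟩ | ⟨x, hx, rfl⟩) <;>
          obtain ⟨s, hs, e, he, rfl⟩ := (ih hi (by omega) x).1 hx
        · exact ⟨s, hs, e + 2^(n-(i+1)), (hstep _).2 ⟨e, he, Or.inl rfl⟩, by ring⟩
        · exact ⟨s, hs, e - 2^(n-(i+1)), (hstep _).2 ⟨e, he, Or.inr rfl⟩, by ring⟩
      · rintro ⟨s, hs, e, he, rfl⟩
        obtain ⟨e', he', h | h⟩ := (hstep e).1 he
        · exact Or.inl ⟨s + e', (ih hi (by omega) _).2 ⟨s, hs, e', he', rfl⟩, by rw [h]; ring⟩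
        · exact Or.inr ⟨s + e', (ih hi (by omega) _).2 ⟨s, hs, e', he', rfl⟩, by rw [h]; ring⟩

lemma int_odd_part (e : ℤ) (he : e ≠ 0) :
    ∃ (s : ℕ) (c : ℤ), c % 2 = 1 ∧ e = c * 2^s ∧ (2:ℤ)^s ≤ |e| := by
  obtain ⟨k, m, hmo, hnat⟩ :=
    Nat.exists_eq_two_pow_mul_odd (n := e.natAbs) (by simpa using he)
  have hcast : |e| = (m:ℤ) * 2^k := by
    rw [Int.abs_eq_natAbs, hnat]; push_cast; ring
  have hm2 : (m:ℤ) % 2 = 1 := by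
    have := Nat.odd_iff.mp hmo; omega
  have h2k : (0:ℤ) < 2^k := by positivity
  have hbound : (2:ℤ)^k ≤ |e| := by
    rw [hcast]
    have : (1:ℤ) ≤ (m:ℤ) := by omega
    nlinarith
  rcases le_or_gt 0 e with h | h
  · refine ⟨k, m, hm2, ?_, hbound⟩
    rw [abs_of_nonneg h] at hcast; exact hcast
  · refine ⟨k, -m, by omega, ?_, hbound⟩
    rw [abs_of_neg h] at hcast; linarith [hcast]

lemma Ep_of_small (n : ℕ) (hn : 2 ≤ n) (e : ℤ) (h1 : |e| ≤ 2^(n-1) - 1) :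
    ∃ j, 1 ≤ j ∧ j ≤ n ∧ Ep n j e := by
  rcases eq_or_ne e 0 with rfl | he
  · exact ⟨1, le_refl 1, by omega, ⟨0, by simp⟩⟩
  · obtain ⟨s, c, hodd, hce, hsb⟩ := int_odd_part e he
    have hs : s ≤ n - 2 := by
      by_contra hcon
      push_neg at hcon
      have : (2:ℤ)^(n-1) ≤ 2^s := pow_le_pow_right₀ (by norm_num) (by omega)
      omega
    have hQ : (2:ℤ)^((n-s)-1) * 2^s = 2^(n-1) := by
      rw [← pow_add]; congr 1; omega
    have h2s : (0:ℤ) < 2^s := by positivity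
    have hce' : |c| * 2^s = |e| := by
      rw [hce, abs_mul, abs_pow, abs_two]
    have hlt : |c| < 2^((n-s)-1) := by
      apply lt_of_mul_lt_mul_right _ (le_of_lt h2s)
      rw [hQ, hce']; omega
    have habs := abs_le.mp (show |c| ≤ 2^((n-s)-1) - 1 by omega)
    refine ⟨n - s, by omega, by omega, c, ?_, habs.2, habs.1, fun _ => hodd⟩
    rw [show n - (n - s) = s by omega]; exact hce

lemma val_false (n j j' : ℕ) (c c' δ : ℤ) (hj2 : 2 ≤ j) (hjn : j ≤ n)
    (hj'1 : 1 ≤ j') (hlt : j' < j) (hc : c % 2 = 1)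
    (heq : c * 2^(n-j) = δ + c' * 2^(n-j'))
    (hδ : δ = 0 ∨ δ = 2^(n-1) ∨ δ = -2^(n-1)) : False := by
  obtain ⟨a, ha⟩ : ∃ a, n - j' = (n-j) + 1 + a := ⟨n-j' - (n-j) - 1, by omega⟩
  obtain ⟨b, hb⟩ : ∃ b, n - 1 = (n-j) + 1 + b := ⟨n-1 - (n-j) - 1, by omega⟩
  have hp : (0:ℤ) < 2^(n-j) := by positivity
  have e1 : (2:ℤ)^(n-j') = (2 * 2^a) * 2^(n-j) := by
    rw [ha, pow_add, pow_add, pow_one]; ring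
  have e2 : (2:ℤ)^(n-1) = (2 * 2^b) * 2^(n-j) := by
    rw [hb, pow_add, pow_add, pow_one]; ring
  have hq : ∃ q : ℤ, c * 2^(n-j) = (2*q) * 2^(n-j) := by
    rcases hδ with rfl | rfl | rfl
    · exact ⟨2^a * c', by rw [heq, e1]; ring⟩
    · exact ⟨2^b + 2^a * c', by rw [heq, e2, e1]; ring⟩
    · exact ⟨-2^b + 2^a * c', by rw [heq, e2, e1]; ring⟩
  obtain ⟨q, hqe⟩ := hq
  have : c = 2*q := mul_right_cancel₀ (ne_of_gt hp) hqe
  omega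

lemma Ep_bound (n j : ℕ) (e : ℤ) (hj : 1 ≤ j) (hjn : j ≤ n) (h : Ep n j e) :
    |e| ≤ 2^(n-1) - 1 := by
  obtain ⟨c, rfl, h1, h2, -⟩ := h
  have habs : |c| ≤ 2^(j-1) - 1 := abs_le.2 ⟨by omega, h1⟩
  have hpos : (0:ℤ) < 2^(n-j) := by positivity
  have h1p : (1:ℤ) ≤ 2^(n-j) := hpos
  calc |c * 2^(n-j)| = |c| * 2^(n-j) := by rw [abs_mul, abs_pow, abs_two]
    _ ≤ (2^(j-1) - 1) * 2^(n-j) := mul_le_mul_of_nonneg_right habs (le_of_lt hpos)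
    _ = 2^(n-1) - 2^(n-j) := by
        rw [sub_mul, one_mul, ← pow_add]; congr 2; omega
    _ ≤ 2^(n-1) - 1 := by omega

lemma Ep_j_eq (n : ℕ) (j j' : ℕ) (e e' : ℤ)
    (hj1 : 1 ≤ j) (hjn : j ≤ n) (hj'1 : 1 ≤ j') (hj'n : j' ≤ n)
    (hE : Ep n j e) (hE' : Ep n j' e')
    (hδ : e - e' = 0 ∨ e - e' = 2^(n-1) ∨ e - e' = -2^(n-1)) : j = j' := by
  by_contra hne
  obtain ⟨c, rfl, -, -, ho⟩ := hE
  obtain ⟨c', rfl, -, -, ho'⟩ := hE'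
  rcases lt_or_gt_of_ne hne with hlt | hlt
  · refine val_false n j' j c' c (c' * 2^(n-j') - c * 2^(n-j)) (by omega) hj'n hj1 hlt
      (ho' (by omega)) (by ring) ?_
    rcases hδ with h | h | h
    · left; omega
    · right; right; omega
    · right; left; omega
  · refine val_false n j j' c c' (c * 2^(n-j) - c' * 2^(n-j')) (by omega) hjn hj'1 hlt
      (ho (by omega)) (by ring) ?_
    rcases hδ with h | h | h
    · left; omega
    · right; left; omega
    · right; right; omega

lemma floor_step (α : ℝ) (hα1 : 1 ≤ α) (hα2 : α < 2) (k : ℕ) :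
    ⌊((k+1:ℕ) : ℝ) * α⌋ = ⌊(k:ℝ)*α⌋ + 1 ∨ ⌊((k+1:ℕ):ℝ)*α⌋ = ⌊(k:ℝ)*α⌋ + 2 := by
  have h0 : ((k+1:ℕ):ℝ)*α = (k:ℝ)*α + α := by push_cast; ring
  have hle : ⌊(k:ℝ)*α⌋ + 1 ≤ ⌊((k+1:ℕ):ℝ)*α⌋ := by
    rw [h0]
    apply Int.le_floor.2
    push_cast
    have := Int.floor_le ((k:ℝ)*α)
    linarith
  have hlt : ⌊((k+1:ℕ):ℝ)*α⌋ < ⌊(k:ℝ)*α⌋ + 3 := by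
    rw [h0]
    apply Int.floor_lt.2
    push_cast
    have := Int.lt_floor_add_one ((k:ℝ)*α)
    linarith
  omega

lemma tdiff (α : ℝ) (hα1 : 1 ≤ α) (hα2 : α < 2) (n k : ℕ) :
    tSeq α n (k+1) - tSeq α n k = 2^(n-1) ∨
    tSeq α n (k+1) - tSeq α n k = 2*2^(n-1) - 1 := by
  unfold tSeq
  rcases floor_step α hα1 hα2 k with h | h <;> rw [h] <;> push_cast <;> [left; right] <;> ring

lemma T_one (α : ℝ) (hα1 : 1 ≤ α) (hα2 : α < 2) (n : ℕ) :
    tSeq α n 1 = 2^(n-1) := by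
  have hf : ⌊((1:ℕ):ℝ) * α⌋ = 1 := by
    rw [Int.floor_eq_iff]
    push_cast
    constructor <;> linarith
  unfold tSeq
  rw [hf]; push_cast; ring

lemma T_gap (α : ℝ) (hα1 : 1 ≤ α) (hα2 : α < 2) (n : ℕ) (k d : ℕ) :
    tSeq α n k + (d:ℤ) * 2^(n-1) ≤ tSeq α n (k+d) := by
  induction d with
  | zero => simp
  | succ d ih =>
    have hA1 : (0:ℤ) < 2^(n-1) := by positivity
    have hstep : tSeq α n (k+d) + 2^(n-1) ≤ tSeq α n (k+d+1) := by
      rcases tdiff α hα1 hα2 n (k+d) with h | h <;> omega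
    have : ((d:ℤ)+1) * 2^(n-1) = (d:ℤ)*2^(n-1) + 2^(n-1) := by ring
    push_cast
    rw [this, show k + (d+1) = (k+d)+1 from rfl]
    omega

lemma sum_pow_Icc : ∀ n : ℕ, ∑ i ∈ Finset.Icc 1 n, (2:ℤ)^(n-i) = 2^n - 1 := by
  intro n
  induction n with
  | zero => simp
  | succ n ih =>
    rw [Finset.sum_Icc_succ_top (by omega)]
    have h2 : ∑ i ∈ Finset.Icc 1 n, (2:ℤ)^(n+1-i) = 2 * ∑ i ∈ Finset.Icc 1 n, (2:ℤ)^(n-i) := by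
      rw [Finset.mul_sum]
      apply Finset.sum_congr rfl
      intro i hi
      simp only [Finset.mem_Icc] at hi
      rw [show n+1-i = (n-i)+1 by omega, pow_succ]; ring
    rw [h2, ih, Nat.sub_self, pow_zero, pow_succ]; ring

lemma delta_lemma (α : ℝ) (hα1 : 1 ≤ α) (hα2 : α < 2) (n : ℕ) (k k' : ℕ)
    (hkk : k ≤ k')
    (hbound : -(2*2^(n-1) - 2) ≤ tSeq α n k' - tSeq α n k)
    (hbound2 : tSeq α n k' - tSeq α n k ≤ 2*2^(n-1) - 2) :
    tSeq α n k' - tSeq α n k = 0 ∨ tSeq α n k' - tSeq α n k = 2^(n-1) := by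
  have hA0 : (0:ℤ) < 2^(n-1) := by positivity
  rcases Nat.lt_or_ge k' (k+2) with h | h
  · have hkk2 : k' = k ∨ k' = k + 1 := by omega
    rcases hkk2 with rfl | rfl
    · left; omega
    · rcases tdiff α hα1 hα2 n k with h1 | h1
      · right; omega
      · omega
  · exfalso
    have hg := T_gap α hα1 hα2 n k (k'-k)
    rw [show k + (k'-k) = k' by omega] at hg
    have h2 : (2:ℤ) ≤ ((k'-k : ℕ):ℤ) := by
      have : 2 ≤ k' - k := by omega
      exact_mod_cast this
    have h3 : 2 * 2^(n-1) ≤ ((k'-k:ℕ):ℤ) * 2^(n-1) :=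
      mul_le_mul_of_nonneg_right h2 (le_of_lt hA0)
    omega


theorem beatty_n_set_partition (α : ℝ) (hα1 : 1 ≤ α) (hα2 : α < 2)
    (n : ℕ) (hn : 2 ≤ n) :
    tSeq α n 1 = 2 ^ (n-1) ∧
    (∀ k, 1 ≤ k → ∃ b, 1 ≤ b ∧ b ≤ n ∧
      tSeq α n (k+1) - tSeq α n k = ∑ i ∈ Finset.Icc 1 b, (2:ℤ) ^ (n - i)) ∧
    Set.PairwiseDisjoint (Set.Icc 1 n)
      (fun j => Dcol n {x | ∃ k, 1 ≤ k ∧ x = tSeq α n k} j) ∧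
    (⋃ j ∈ Set.Icc 1 n, Dcol n {x | ∃ k, 1 ≤ k ∧ x = tSeq α n k} j)
      = {m : ℤ | 0 < m} := by

  set D1 : Set ℤ := {x | ∃ k, 1 ≤ k ∧ x = tSeq α n k} with hD1
  have hA0 : (0:ℤ) < 2^(n-1) := by positivity
  have hTlow : ∀ k : ℕ, 1 ≤ k → (2:ℤ)^(n-1) ≤ tSeq α n k := by
    intro k hk
    have hg := T_gap α hα1 hα2 n 1 (k-1)
    rw [show 1 + (k-1) = k by omega, T_one α hα1 hα2 n] at hg
    have h0 : (0:ℤ) ≤ ((k-1:ℕ):ℤ) * 2^(n-1) := by positivity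
    omega
  refine ⟨T_one α hα1 hα2 n, ?_, ?_, ?_⟩
  · intro k hk
    rcases tdiff α hα1 hα2 n k with h | h
    · exact ⟨1, le_refl 1, by omega, by simpa using h⟩
    · refine ⟨n, by omega, le_refl n, ?_⟩
      rw [sum_pow_Icc n, h,
        show (2:ℤ)^n = 2*2^(n-1) by
          conv_lhs => rw [show n = (n-1)+1 by omega]
          rw [pow_succ]; ring]
  · intro j hj j' hj' hne
    simp only [Set.mem_Icc] at hj hj'
    rw [Function.onFun, Set.disjoint_left]
    intro m hm hm'
    rw [Dcol_mem n D1 j hj.1 hj.2 m] at hm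
    rw [Dcol_mem n D1 j' hj'.1 hj'.2 m] at hm'
    obtain ⟨s, hsD, e, hE, hme⟩ := hm
    obtain ⟨s', hsD', e', hE', hme'⟩ := hm'
    obtain ⟨k, hk, rfl⟩ := hsD
    obtain ⟨k', hk', rfl⟩ := hsD'
    apply hne
    obtain ⟨hb1, hb2⟩ := abs_le.mp (Ep_bound n j e hj.1 hj.2 hE)
    obtain ⟨hb1', hb2'⟩ := abs_le.mp (Ep_bound n j' e' hj'.1 hj'.2 hE')
    apply Ep_j_eq n j j' e e' hj.1 hj.2 hj'.1 hj'.2 hE hE'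
    rcases le_total k k' with hkk | hkk
    · rcases delta_lemma α hα1 hα2 n k k' hkk (by omega) (by omega) with h | h
      · left; omega
      · right; left; omega
    · rcases delta_lemma α hα1 hα2 n k' k hkk (by omega) (by omega) with h | h
      · left; omega
      · right; right; omega
  · ext m
    simp only [Set.mem_iUnion, Set.mem_Icc, Set.mem_setOf_eq, exists_prop]
    constructor
    · rintro ⟨j, ⟨hj1, hjn⟩, hmem⟩
      rw [Dcol_mem n D1 j hj1 hjn m] at hmem
      obtain ⟨s, ⟨k, hk, rfl⟩, e, hE, rfl⟩ := hmem
      obtain ⟨hb1, hb2⟩ := abs_le.mp (Ep_bound n j e hj1 hjn hE)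
      have := hTlow k hk
      omega
    · intro hm
      classical
      set P : ℕ → Prop := fun k => tSeq α n k ≤ m + 2^(n-1) - 1 with hP
      set B : ℕ := (m + 2^(n-1)).toNat with hB
      have hT1 : tSeq α n 1 = 2^(n-1) := T_one α hα1 hα2 n
      have hP1 : P 1 := by show tSeq α n 1 ≤ m + 2^(n-1) - 1; omega
      have h1B : 1 ≤ B := by rw [hB]; omega
      set K := Nat.findGreatest P B with hK
      have hK1 : 1 ≤ K := Nat.le_findGreatest h1B hP1
      have hPK : tSeq α n K ≤ m + 2^(n-1) - 1 := Nat.findGreatest_spec h1B hP1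
      have hKlow : (2:ℤ)^(n-1) ≤ tSeq α n K := hTlow K hK1
      have hKA : ((K:ℤ)+1) * 2^(n-1) ≤ tSeq α n (K+1) := by
        have hg := T_gap α hα1 hα2 n 1 K
        rw [hT1, show 1 + K = K + 1 by omega] at hg
        have he : ((K:ℤ)+1)*2^(n-1) = (K:ℤ)*2^(n-1) + 2^(n-1) := by ring
        omega
      have hnot : m + 2^(n-1) - 1 < tSeq α n (K+1) := by
        rcases le_or_gt (K+1) B with h | h
        · have hg := Nat.findGreatest_is_greatest (P := P) (show K < K+1 by omega) h
          have : ¬ (tSeq α n (K+1) ≤ m + 2^(n-1) - 1) := hg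
          omega
        · have hBK : (B:ℤ) ≤ (K:ℤ) := by exact_mod_cast Nat.le_of_lt_succ h
          have hKB : (B:ℤ) = m + 2^(n-1) := by rw [hB]; omega
          have hmul : (K:ℤ)+1 ≤ ((K:ℤ)+1) * 2^(n-1) :=
            le_mul_of_one_le_right (by omega) (by omega)
          omega
      have hdd : tSeq α n (K+1) - tSeq α n K ≤ 2*2^(n-1) - 1 := by
        rcases tdiff α hα1 hα2 n K with h | h <;> omega
      obtain ⟨j, hj1, hjn, hEp⟩ :=
        Ep_of_small n hn (m - tSeq α n K) (abs_le.2 ⟨by omega, by omega⟩)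
      refine ⟨j, ⟨hj1, hjn⟩, ?_⟩
      rw [Dcol_mem n D1 j hj1 hjn m]
      exact ⟨tSeq α n K, ⟨K, hK1, rfl⟩, m - tSeq α n K, hEp, by ring⟩
end

section
/- (KLM formula) For every positive integer n and all integers K, L, M such that K·a(n) + L·n + M is a positive integer, a(K·a(n) + L·n + M) = K·b(n) + L·a(n) + ⌊Mφ + (Lφ − K)·{nφ}/φ⌋. -/
noncomputable def φ : ℝ := (1 + Real.sqrt 5) / 2
noncomputable def a (n : ℕ) : ℤ := ⌊(n : ℝ) * φ⌋
noncomputable def b (n : ℕ) : ℤ := ⌊(n : ℝ) * φ ^ 2⌋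

/-- The KLM formula. -/
theorem klm_formula (n : ℕ) (hn : 0 < n) (K L M : ℤ)
    (hpos : 0 < K * a n + L * (n : ℤ) + M) :
    ⌊((K * a n + L * (n : ℤ) + M : ℤ) : ℝ) * φ⌋
      = K * b n + L * a n
        + ⌊(M : ℝ) * φ + ((L : ℝ) * φ - (K : ℝ)) * Int.fract ((n : ℝ) * φ) / φ⌋ := by
  have h5 : Real.sqrt 5 ^ 2 = 5 := Real.sq_sqrt (by norm_num)
  have hφ2 : φ ^ 2 = φ + 1 := by unfold φ; nlinarith [h5]
  have hφpos : (0 : ℝ) < φ := by unfold φ; positivity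
  have hinv : φ⁻¹ = φ - 1 :=
    inv_eq_of_mul_eq_one_right (by nlinarith)
  have hb : b n = a n + n := by
    unfold a b
    rw [hφ2, show (n : ℝ) * (φ + 1) = (n : ℝ) * φ + (n : ℤ) by push_cast; ring,
      Int.floor_add_intCast]
  have ha : (a n : ℝ) = (n : ℝ) * φ - Int.fract ((n : ℝ) * φ) := by
    unfold a; rw [Int.self_sub_fract]
  have key : ((K * a n + L * (n : ℤ) + M : ℤ) : ℝ) * φ
      = ((K * b n + L * a n : ℤ) : ℝ)
        + ((M : ℝ) * φ + ((L : ℝ) * φ - (K : ℝ)) * Int.fract ((n : ℝ) * φ) / φ) := by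
    rw [div_eq_mul_inv, hinv]
    push_cast [hb, ha]
    linear_combination ((K : ℝ) * n - L * Int.fract ((n : ℝ) * φ)) * hφ2
  rw [key, Int.floor_intCast_add]
end

section
/- For every positive integer n, {a(n)·φ} = 1 − {nφ}/φ and {b(n)·φ} = {nφ}/φ². -/
lemma hs5 : Real.sqrt 5 ^ 2 = 5 := Real.sq_sqrt (by norm_num)

lemma hφsq : φ ^ 2 = φ + 1 := by
  have h := hs5; unfold φ; nlinarith [Real.sqrt_nonneg 5]

lemma hφ_gt : 1 < φ := by
  have h := hs5; unfold φ; nlinarith [Real.sqrt_nonneg 5]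

lemma hφ_lt : φ < 2 := by
  have h := hs5; unfold φ; nlinarith [Real.sqrt_nonneg 5]

lemma hφ_irr : Irrational φ := by
  unfold φ; exact Real.goldenRatio_irrational

theorem fract_a_b_mul_phi (n : ℕ) (hn : 0 < n) :
    Int.fract ((a n : ℝ) * φ) = 1 - Int.fract ((n : ℝ) * φ) / φ ∧
    Int.fract ((b n : ℝ) * φ) = Int.fract ((n : ℝ) * φ) / φ ^ 2 := by
  have hφ1 := hφ_gt
  have hφ2 := hφ_lt
  have hφq := hφsq
  have hφ0 : (0:ℝ) < φ := lt_trans one_pos hφ1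
  set f := Int.fract ((n : ℝ) * φ) with hf
  have hirr : Irrational ((n : ℝ) * φ) := hφ_irr.natCast_mul hn.ne'
  have hfloor : ((a n : ℝ)) = (n : ℝ) * φ - f := by
    have := Int.floor_add_fract ((n : ℝ) * φ)
    simp only [a]; linarith
  have hf1 : f < 1 := Int.fract_lt_one _
  have hf0 : 0 < f := by
    rcases (Int.fract_nonneg ((n : ℝ) * φ)).lt_or_eq with h | h
    · exact h
    · exfalso
      have : (n : ℝ) * φ = ((⌊(n : ℝ) * φ⌋ : ℤ) : ℝ) := by
        have := Int.floor_add_fract ((n : ℝ) * φ); linarith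
      exact hirr.ne_int _ this
  -- first part
  have key1 : (a n : ℝ) * φ = ((n + a n - 1 : ℤ) : ℝ) + (1 + f - f * φ) := by
    push_cast
    rw [hfloor]; ring_nf; nlinarith [hφq]
  have range1 : Int.fract (1 + f - f * φ) = 1 + f - f * φ := by
    apply Int.fract_eq_self.mpr
    constructor <;> nlinarith
  have h1 : Int.fract ((a n : ℝ) * φ) = 1 + f - f * φ := by
    rw [key1, Int.fract_intCast_add, range1]
  have e1 : 1 + f - f * φ = 1 - f / φ := by
    field_simp
    nlinarith
  -- second part
  have hb : ((b n : ℝ)) = (n : ℝ) + (a n : ℝ) := by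
    have : (n : ℝ) * φ ^ 2 = ((n : ℤ) : ℝ) + (n : ℝ) * φ := by push_cast; nlinarith [hφq]
    simp only [b, a, this, Int.floor_intCast_add]
    push_cast; ring
  have key2 : (b n : ℝ) * φ = ((n + 2 * a n : ℤ) : ℝ) + (2 * f - f * φ) := by
    push_cast
    rw [hb, hfloor]; nlinarith [hφq]
  have range2 : Int.fract (2 * f - f * φ) = 2 * f - f * φ := by
    apply Int.fract_eq_self.mpr
    constructor <;> nlinarith
  have h2 : Int.fract ((b n : ℝ) * φ) = 2 * f - f * φ := by
    rw [key2, Int.fract_intCast_add, range2]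
  have e2 : 2 * f - f * φ = f / φ ^ 2 := by
    rw [eq_div_iff (by positivity)]
    linear_combination (f - f * φ) * hφq
  exact ⟨by rw [h1, e1], by rw [h2, e2]⟩
end

section
/- Let d(n) = ⌊nφ³⌋. For every positive integer n: if {nφ} > 1/2 then {d(n)·φ} lies in the open interval ((3 − √5)/2, 1/2), and if {nφ} < 1/2 then {d(n)·φ} lies in the open interval ((4 − √5)/2, 1). -/
noncomputable def d (n : ℕ) : ℤ := ⌊(n : ℝ) * φ ^ 3⌋

theorem fract_d_phi_intervals (n : ℕ) (hn : 0 < n) :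
    (Int.fract ((n : ℝ) * φ) > 1 / 2 →
      Int.fract ((d n : ℝ) * φ) ∈ Set.Ioo ((3 - Real.sqrt 5) / 2) (1 / 2)) ∧
    (Int.fract ((n : ℝ) * φ) < 1 / 2 →
      Int.fract ((d n : ℝ) * φ) ∈ Set.Ioo ((4 - Real.sqrt 5) / 2) 1) := by
  have hs : Real.sqrt 5 ^ 2 = 5 := Real.sq_sqrt (by norm_num)
  have hsn : (0:ℝ) ≤ Real.sqrt 5 := Real.sqrt_nonneg 5
  have h2 : (2:ℝ) < Real.sqrt 5 := by nlinarith
  have h3 : Real.sqrt 5 < 3 := by nlinarith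
  have hφval : φ = (1 + Real.sqrt 5) / 2 := rfl
  have hφ2 : φ ^ 2 = φ + 1 := by rw [hφval]; nlinarith
  have hφ3 : φ ^ 3 = 2 * φ + 1 := by linear_combination (φ + 1) * hφ2
  have hirrφ : Irrational φ := by
    have h := Nat.Prime.irrational_sqrt (by norm_num : Nat.Prime 5)
    have h2' := (h.ratCast_add (q := 1)).div_natCast (two_ne_zero)
    rw [hφval]
    convert h2' using 2 <;> push_cast <;> ring
  have hirr : Irrational ((n : ℝ) * φ) := hirrφ.natCast_mul hn.ne'
  set f := Int.fract ((n:ℝ) * φ) with hfdef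
  set m := ⌊(n:ℝ) * φ⌋ with hmdef
  have hm : (m : ℝ) = n * φ - f := by rw [hfdef, hmdef, Int.self_sub_fract]
  have hf0 : 0 < f := Int.fract_pos.mpr (hirr.ne_int m)
  have hf1 : f < 1 := Int.fract_lt_one _
  constructor
  · intro h
    have hd : d n = n + 2 * m + 1 := by
      rw [d, Int.floor_eq_iff]
      push_cast
      constructor <;> nlinarith
    have key : (d n : ℝ) * φ =
        ((3 * m + 2 * n + 1 : ℤ) : ℝ) + (f * (3 - 2 * φ) + φ - 1) := by
      rw [hd]
      push_cast
      linear_combination (2 * φ - 3) * hm + 2 * (n : ℝ) * hφ2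
    rw [key, Int.fract_intCast_add, Int.fract_eq_self.mpr (by constructor <;> nlinarith)]
    constructor <;> nlinarith
  · intro h
    have hd : d n = n + 2 * m := by
      rw [d, Int.floor_eq_iff]
      push_cast
      constructor <;> nlinarith
    have key : (d n : ℝ) * φ =
        ((3 * m + 2 * n - 1 : ℤ) : ℝ) + (f * (3 - 2 * φ) + 1) := by
      rw [hd]
      push_cast
      linear_combination (2 * φ - 3) * hm + 2 * (n : ℝ) * hφ2
    rw [key, Int.fract_intCast_add, Int.fract_eq_self.mpr (by constructor <;> nlinarith)]
    constructor <;> nlinarith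
end

section
/- Let c(n) = ⌊n·φ²/2⌋ and λ = (5 − √5)/4. For every positive integer n: if {nφ} < λ then φ³·{c(2n+1)·φ} − φ·{nφ} = φ², and if {nφ} > λ then φ³·{c(2n+1)·φ} − φ·{nφ} = 1. -/
noncomputable def c (n : ℕ) : ℤ := ⌊(n : ℝ) * φ ^ 2 / 2⌋

theorem fract_c_odd_identity (n : ℕ) (hn : 0 < n) :
    (Int.fract ((n : ℝ) * φ) < (5 - Real.sqrt 5) / 4 →
      φ ^ 3 * Int.fract ((c (2 * n + 1) : ℝ) * φ) - φ * Int.fract ((n : ℝ) * φ) = φ ^ 2) ∧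
    (Int.fract ((n : ℝ) * φ) > (5 - Real.sqrt 5) / 4 →
      φ ^ 3 * Int.fract ((c (2 * n + 1) : ℝ) * φ) - φ * Int.fract ((n : ℝ) * φ) = 1) := by
  have hs5 : Real.sqrt 5 ^ 2 = 5 := Real.sq_sqrt (by norm_num)
  set s := Real.sqrt 5 with hsdef
  have hs2 : 2 < s := by nlinarith [Real.sqrt_nonneg 5]
  have hs3 : s < 9/4 := by nlinarith [Real.sqrt_nonneg 5]
  set f := Int.fract ((n : ℝ) * φ) with hfdef
  set k := ⌊(n : ℝ) * φ⌋ with hkdef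
  have hf0 : 0 ≤ f := Int.fract_nonneg _
  have hf1 : f < 1 := Int.fract_lt_one _
  have hkf : (n : ℝ) * φ = k + f := by
    rw [hfdef, hkdef, Int.fract]; ring
  have hφ : φ = (1 + s) / 2 := rfl
  have hkr : (k : ℝ) = (n : ℝ) * (1 + s) / 2 - f := by
    rw [hφ] at hkf; linarith
  have hval : ((2 * n + 1 : ℕ) : ℝ) * φ ^ 2 / 2
      = ((n + k : ℤ) : ℝ) + (f + (3 + s) / 4) := by
    push_cast
    rw [hφ, hkr]
    linear_combination ((n : ℝ) / 4 + 1 / 8) * hs5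
  constructor
  · intro hlt
    have hfloor : c (2 * n + 1) = n + k + 1 := by
      rw [c, hval, Int.floor_intCast_add]
      have h1 : ⌊f + (3 + s) / 4⌋ = 1 := by
        rw [Int.floor_eq_iff]
        push_cast
        exact ⟨by linarith, by linarith⟩
      rw [h1]
    have hfr : Int.fract ((c (2 * n + 1) : ℝ) * φ)
        = (s - 1) / 2 + f * (3 - s) / 2 := by
      rw [Int.fract_eq_iff]
      refine ⟨by nlinarith, by nlinarith, ⟨2 * k + n + 1, ?_⟩⟩
      rw [hfloor]
      push_cast
      rw [hφ, hkr]
      linear_combination ((n : ℝ) / 4) * hs5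
    rw [hfr, hφ]
    linear_combination ((-s^2*f/16 + s^2/16 + s/8 + f/16 + 1/16)) * hs5
  · intro hgt
    have hfloor : c (2 * n + 1) = n + k + 2 := by
      rw [c, hval, Int.floor_intCast_add]
      have h2 : ⌊f + (3 + s) / 4⌋ = 2 := by
        rw [Int.floor_eq_iff]
        push_cast
        exact ⟨by linarith, by linarith⟩
      rw [h2]
    have hfr : Int.fract ((c (2 * n + 1) : ℝ) * φ)
        = (s - 2) + f * (3 - s) / 2 := by
      rw [Int.fract_eq_iff]
      refine ⟨by nlinarith, by nlinarith, ⟨2 * k + n + 3, ?_⟩⟩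
      rw [hfloor]
      push_cast
      rw [hφ, hkr]
      linear_combination ((n : ℝ) / 4) * hs5
    rw [hfr, hφ]
    linear_combination ((-s^2*f/16 + s^2/8 + s/8 + f/16 + 1/4)) * hs5
end

section
/- Let r be an odd positive integer and n a positive integer. Then ⌊F_r·φ + (φ − 1)·{nφ}/φ⌋ = F_{r+1}, where F_k denotes the k-th Fibonacci number. -/
theorem floor_fib_phi (r : ℕ) (hr : Odd r) (hrpos : 0 < r) (n : ℕ) (hn : 0 < n) :
    ⌊(Nat.fib r : ℝ) * φ + (φ - 1) * Int.fract ((n : ℝ) * φ) / φ⌋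
      = (Nat.fib (r + 1) : ℤ) := by
  have hφ : φ = Real.goldenRatio := rfl
  have hgold : 1 < Real.goldenRatio := Real.one_lt_goldenRatio
  have hgold0 : (0:ℝ) < Real.goldenRatio := by linarith
  -- key identity: F_r * φ = F_{r+1} + φ⁻¹ ^ r
  have hkey : (Nat.fib r : ℝ) * Real.goldenRatio
      = (Nat.fib (r + 1) : ℝ) + Real.goldenRatio⁻¹ ^ r := by
    have h1 := Real.fib_succ_sub_goldenRatio_mul_fib r
    have h2 : Real.goldenConj ^ r = -(Real.goldenRatio⁻¹ ^ r) := by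
      rw [Real.inv_goldenRatio, hr.neg_pow, neg_neg]
    rw [h2] at h1
    linarith
  set t := Int.fract ((n : ℝ) * Real.goldenRatio) with ht
  have ht0 : 0 ≤ t := Int.fract_nonneg _
  have ht1 : t < 1 := Int.fract_lt_one _
  have hsq : Real.goldenRatio ^ 2 = Real.goldenRatio + 1 := Real.goldenRatio_sq
  -- the extra term e := φ⁻¹^r + (φ-1)*t/φ satisfies 0 ≤ e < 1
  have hinvlt : Real.goldenRatio⁻¹ ^ r ≤ Real.goldenRatio⁻¹ := by
    have h1 : Real.goldenRatio⁻¹ < 1 := inv_lt_one_of_one_lt₀ hgold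
    have h0 : 0 < Real.goldenRatio⁻¹ := inv_pos.mpr hgold0
    calc Real.goldenRatio⁻¹ ^ r ≤ Real.goldenRatio⁻¹ ^ 1 :=
        pow_le_pow_of_le_one h0.le h1.le hrpos
      _ = Real.goldenRatio⁻¹ := pow_one _
  have hterm : (Real.goldenRatio - 1) * t / Real.goldenRatio = t * (Real.goldenRatio⁻¹)^2 := by
    have h5 : Real.sqrt 5 ^ 2 = 5 := Real.sq_sqrt (by norm_num)
    field_simp
    linear_combination t * h5
  rw [hφ, hkey]
  rw [Int.floor_eq_iff]
  push_cast
  constructor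
  · have h0 : 0 ≤ Real.goldenRatio⁻¹ ^ r := by positivity
    have h1 : 0 ≤ (Real.goldenRatio - 1) * t / Real.goldenRatio := by
      apply div_nonneg _ hgold0.le
      exact mul_nonneg (by linarith) ht0
    linarith
  · have h2 : Real.goldenRatio⁻¹ ^ r + (Real.goldenRatio - 1) * t / Real.goldenRatio < 1 := by
      rw [hterm]
      have hi : 0 < Real.goldenRatio⁻¹ := inv_pos.mpr hgold0
      have hs : Real.goldenRatio⁻¹ + (Real.goldenRatio⁻¹)^2 = 1 := by
        have h5 : Real.sqrt 5 ^ 2 = 5 := Real.sq_sqrt (by norm_num)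
        field_simp
        nlinarith [h5]
      nlinarith [mul_pos (sub_pos.mpr ht1) (pow_pos hi 2)]
    linarith
end

section
/- For every positive integer n, ⌊nφ³⌋ is a member of the Beatty sequence A = {⌊mφ⌋ : m a positive integer}; that is, there exists a positive integer m with ⌊nφ³⌋ = ⌊mφ⌋. -/
theorem phi_cubed_beatty_in_A (n : ℕ) (hn : 0 < n) :
    ∃ m : ℕ, 0 < m ∧ ⌊(n : ℝ) * φ ^ 3⌋ = ⌊(m : ℝ) * φ⌋ := by
  have hφ : φ = Real.goldenRatio := rfl
  have hsq : φ ^ 2 = φ + 1 := by rw [hφ]; exact Real.goldenRatio_sq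
  have h1 : (1 : ℝ) < φ := by rw [hφ]; exact Real.one_lt_goldenRatio
  have h2 : φ < 2 := by rw [hφ]; exact Real.goldenRatio_lt_two
  have hirr : Irrational ((n : ℝ) * φ) := by
    rw [hφ]; exact Irrational.natCast_mul Real.goldenRatio_irrational hn.ne'
  set x : ℝ := (n : ℝ) * φ with hx
  set k : ℤ := ⌊x⌋ with hk
  have hkle : (k : ℝ) ≤ x := Int.floor_le x
  have hklt : x < k + 1 := Int.lt_floor_add_one x
  have hn1 : (1 : ℝ) ≤ (n : ℝ) := by exact_mod_cast hn
  have hxgt : (1 : ℝ) < x := by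
    calc (1:ℝ) < φ := h1
    _ = 1 * φ := by ring
    _ ≤ x := by rw [hx]; exact mul_le_mul_of_nonneg_right hn1 (by linarith)
  have hk1 : (1 : ℤ) ≤ k := by
    have : (0 : ℝ) < k + 1 := by linarith
    exact_mod_cast Int.le_floor.2 (by exact_mod_cast hkle.trans_lt hklt |>.le.trans (le_refl _) |> fun _ => (by nlinarith : (1:ℝ) ≤ x))
  -- relation (n : ℝ) = x * (φ - 1)
  have hnx : (n : ℝ) = x * (φ - 1) := by
    rw [hx]; nlinarith [hsq]
  have hne : x ≠ (k : ℝ) + 1 / 2 := by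
    intro h
    exact hirr ⟨(2 * k + 1) / 2, by push_cast; rw [← hx] at *; linarith⟩
  have hcube : (n : ℝ) * φ ^ 3 = n + 2 * x := by
    rw [hx]; nlinarith [hsq]
  have hknn : (0:ℤ) ≤ k := by linarith
  have hcast : ((k.toNat : ℕ) : ℝ) = (k : ℝ) := by exact_mod_cast Int.toNat_of_nonneg hknn
  rcases lt_or_gt_of_ne hne with hlt | hgt
  · -- α < 1/2, take m = n + k
    refine ⟨n + k.toNat, by positivity, ?_⟩
    have hmk : ((n + k.toNat : ℕ) : ℝ) = (n : ℝ) + (k : ℝ) := by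
      push_cast [hcast]; ring
    have hL : ⌊(n : ℝ) * φ ^ 3⌋ = n + 2 * k := by
      rw [Int.floor_eq_iff]
      constructor
      · push_cast; rw [hcube]; linarith
      · push_cast; rw [hcube]; linarith
    have hR : ⌊((n + k.toNat : ℕ) : ℝ) * φ⌋ = n + 2 * k := by
      rw [Int.floor_eq_iff]
      rw [hmk]
      constructor
      · push_cast; nlinarith
      · push_cast; nlinarith
    rw [hL, hR]
  · -- α > 1/2, take m = n + k + 1
    refine ⟨n + k.toNat + 1, by positivity, ?_⟩
    have hmk : ((n + k.toNat + 1 : ℕ) : ℝ) = (n : ℝ) + (k : ℝ) + 1 := by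
      push_cast [hcast]; ring
    have hL : ⌊(n : ℝ) * φ ^ 3⌋ = n + 2 * k + 1 := by
      rw [Int.floor_eq_iff]
      constructor
      · push_cast; rw [hcube]; linarith
      · push_cast; rw [hcube]; linarith
    have hR : ⌊((n + k.toNat + 1 : ℕ) : ℝ) * φ⌋ = n + 2 * k + 1 := by
      rw [Int.floor_eq_iff]
      rw [hmk]
      constructor
      · push_cast; nlinarith
      · push_cast; nlinarith
    rw [hL, hR]
end
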